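/- Let x : ℕ → ℝⁿ be a solution of the difference inclusion generated by A_1, …, A_M ∈ ℝ^{n×n}, i.e., x(k+1) = A(w(k)) x(k) for all k for some sequence w : ℕ → W. If x(k) converges to some x̄ ∈ ℝⁿ as k → ∞, then there exists w̄ ∈ W such that (A(w̄) − I) x̄ = 0. -/

import Mathlib

open Matrix Filter

/-- `w` lies in the unit simplex `W ⊆ ℝ^M`. -/
def InSimplex {M : ℕ} (w : Fin M → ℝ) : Prop :=
  (∀ i, 0 ≤ w i) ∧ ∑ i, w i = 1

/-- The convex combination `A(w) = ∑ᵢ wᵢ Aᵢ`. -/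
def Amix {n M : ℕ} (A : Fin M → Matrix (Fin n) (Fin n) ℝ) (w : Fin M → ℝ) :
    Matrix (Fin n) (Fin n) ℝ :=
  ∑ i, w i • A i

/-- `x` is a solution of the difference inclusion generated by `A₁, …, A_M`. -/
def IsInclusionSolution {n M : ℕ} (A : Fin M → Matrix (Fin n) (Fin n) ℝ)
    (x : ℕ → Fin n → ℝ) : Prop :=
  ∃ w : ℕ → Fin M → ℝ, (∀ k, InSimplex (w k)) ∧
    ∀ k, x (k + 1) = (Amix A (w k)) *ᵥ (x k)

/-- Weak convergence: every solution of the difference inclusion has a limit. -/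
def WeaklyConvergent {n M : ℕ} (A : Fin M → Matrix (Fin n) (Fin n) ℝ) : Prop :=
  ∀ x : ℕ → Fin n → ℝ, IsInclusionSolution A x →
    ∃ xbar : Fin n → ℝ, Tendsto x atTop (nhds xbar)

/-- Strong convergence: every solution converges to a point of `⋂ᵢ ker(Aᵢ − I)`. -/
def StronglyConvergent {n M : ℕ} (A : Fin M → Matrix (Fin n) (Fin n) ℝ) : Prop :=
  ∀ x : ℕ → Fin n → ℝ, IsInclusionSolution A x →
    ∃ xbar : Fin n → ℝ, (∀ i, (A i - 1) *ᵥ xbar = 0) ∧ Tendsto x atTop (nhds xbar)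

lemma amix_mulVec_continuous {n M : ℕ} (A : Fin M → Matrix (Fin n) (Fin n) ℝ) :
    Continuous (fun p : (Fin M → ℝ) × (Fin n → ℝ) => Amix A p.1 *ᵥ p.2) := by
  apply continuous_pi
  intro j
  simp only [Matrix.mulVec, dotProduct, Amix, Matrix.sum_apply, Matrix.smul_apply,
    smul_eq_mul, Finset.sum_apply]
  exact continuous_finset_sum _ fun i _ =>
    (continuous_finset_sum _ fun m _ =>
      (((continuous_apply m).comp continuous_fst).mul continuous_const)).mul
      ((continuous_apply i).comp continuous_snd)

attribute [local irreducible] Amix Matrix.mulVec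

/-- if a solution `x(k)` of the difference inclusion converges to `x̄`,
then `(A(w̄) − I) x̄ = 0` for some `w̄ ∈ W`. -/
theorem limit_is_fixed_point_of_some_mix_dt
    (n M : ℕ) (A : Fin M → Matrix (Fin n) (Fin n) ℝ)
    (w : ℕ → Fin M → ℝ) (hw : ∀ k, InSimplex (w k))
    (x : ℕ → Fin n → ℝ) (hx : ∀ k, x (k + 1) = (Amix A (w k)) *ᵥ (x k))
    (xbar : Fin n → ℝ) (hconv : Tendsto x atTop (nhds xbar)) :
    ∃ wbar : Fin M → ℝ, InSimplex wbar ∧ (Amix A wbar - 1) *ᵥ xbar = 0 := by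
  have hcompact : IsCompact (stdSimplex ℝ (Fin M)) := isCompact_stdSimplex _ _
  have hmem : ∀ k, w k ∈ stdSimplex ℝ (Fin M) := fun k => ⟨(hw k).1, (hw k).2⟩
  obtain ⟨wbar, hwbar, φ, hφ, hwconv⟩ := hcompact.tendsto_subseq hmem
  refine ⟨wbar, ⟨hwbar.1, hwbar.2⟩, ?_⟩
  have hcont := amix_mulVec_continuous A
  have h1 : Tendsto (fun j => x (φ j)) atTop (nhds xbar) :=
    hconv.comp hφ.tendsto_atTop
  have hp : Tendsto (fun j => (w (φ j), x (φ j))) atTop (nhds (wbar, xbar)) :=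
    hwconv.prodMk_nhds h1
  have h2 : Tendsto (fun j => Amix A (w (φ j)) *ᵥ x (φ j)) atTop (nhds (Amix A wbar *ᵥ xbar)) :=
    (hcont.tendsto (wbar, xbar)).comp hp
  have h3 : Tendsto (fun j => x (φ j + 1)) atTop (nhds xbar) :=
    hconv.comp ((tendsto_add_atTop_nat 1).comp hφ.tendsto_atTop)
  have h4 : Tendsto (fun j => x (φ j + 1)) atTop (nhds (Amix A wbar *ᵥ xbar)) := by
    simpa only [hx] using h2
  have heq : Amix A wbar *ᵥ xbar = xbar := tendsto_nhds_unique h4 h3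
  rw [Matrix.sub_mulVec, Matrix.one_mulVec, heq, sub_self]
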